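/- If s ∈ (0,1) satisfies 4·arccos(1 - 2/(1+s)²) + 2·arccos(s/(1+s)) = 2π (corona 1111s), then s⁴ - 10s² - 8s + 9 = 0. -/

import Mathlib

open Real

theorem corona_1111s (s : ℝ) (hs : s ∈ Set.Ioo (0:ℝ) 1)
    (h : 3 * Real.arccos (1 - 2/(1+s)^2) + 2 * Real.arccos (s/(1+s)) = 2 * π) :
    s^4 - 10*s^2 - 8*s + 9 = 0 := by
  obtain ⟨h0, h1⟩ := hs
  have ht : (0:ℝ) < 1 + s := by linarith
  have ht2 : (1:ℝ) ≤ (1+s)^2 := by nlinarith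
  have hx1 : -1 ≤ 1 - 2/(1+s)^2 := by
    have : 2/(1+s)^2 ≤ 2 := by
      rw [div_le_iff₀ (by positivity)]; nlinarith
    linarith
  have hx2 : 1 - 2/(1+s)^2 ≤ 1 := by
    have : 0 < 2/(1+s)^2 := by positivity
    linarith
  have hy1 : -1 ≤ s/(1+s) := by
    have : (0:ℝ) ≤ s/(1+s) := by positivity
    linarith
  have hy2 : s/(1+s) ≤ 1 := by
    rw [div_le_one ht]; linarith
  have hA := Real.cos_arccos hx1 hx2
  have hB := Real.cos_arccos hy1 hy2
  have h3 : 3 * Real.arccos (1 - 2/(1+s)^2) = 2*π - 2 * Real.arccos (s/(1+s)) := by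
    linarith
  have hc : Real.cos (3 * Real.arccos (1 - 2/(1+s)^2))
      = Real.cos (2 * Real.arccos (s/(1+s))) := by
    rw [h3, Real.cos_sub, Real.cos_two_pi, Real.sin_two_pi]; ring
  rw [Real.cos_three_mul, Real.cos_two_mul, hA, hB] at hc
  have hne : (1+s) ≠ 0 := ne_of_gt ht
  field_simp at hc
  have key : (s^4 - 10*s^2 - 8*s + 9) * (4*s*(1+s)^4) = 0 := by linear_combination (1+s)^4 * hc
  have h4 : 4*s*(1+s)^4 ≠ 0 := by positivity
  exact (mul_eq_zero.mp key).resolve_right h4
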